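/- Let A be a commutative finite-dimensional reduced arithmetical ring. Then A is isomorphic to a finite direct product of integral domains. -/

import Mathlib

open MulOpposite

/-- Deviation (Gabriel–Rentschler Krull dimension) of a preorder is `≤ α`:
in every strictly descending chain, all but finitely many of the
intervals (corresponding to successive factor modules) have deviation `< α`. -/
def DevLE (α : Ordinal.{0}) (P : Type) (inst : Preorder P) : Prop :=
  ∀ f : ℕ → P, (∀ n : ℕ, inst.lt (f (n + 1)) (f n)) →
    ∃ N : ℕ, ∀ n : ℕ, N ≤ n → ∃ β : Ordinal.{0}, ∃ _ : β < α,
      DevLE β {x : P // inst.le (f (n + 1)) x ∧ inst.le x (f n)}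
        (@Subtype.preorder P inst fun x => inst.le (f (n + 1)) x ∧ inst.le x (f n))
termination_by α

/-- A preorder has Krull dimension (deviation) if its deviation exists as an ordinal. -/
def HasKdimO (P : Type) [inst : Preorder P] : Prop := ∃ α : Ordinal.{0}, DevLE α P inst

/-- A module has Gabriel–Rentschler Krull dimension: the deviation of its submodule
lattice exists (intervals of this lattice are the submodule lattices of the
subquotients, so this agrees with the transfinite definition via factor modules). -/
def ModHasKdim (R M : Type) [Ring R] [AddCommGroup M] [Module R M] : Prop :=
  HasKdimO (Submodule R M)

/-- A complete lattice (of submodules/ideals) is finite-dimensional: it contains no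
infinite independent family (direct sum) of nonzero elements. -/
def FinDimL (L : Type) [CompleteLattice L] : Prop :=
  ¬ ∃ f : ℕ → L, (∀ n, f n ≠ ⊥) ∧ ∀ n, f n ⊓ (⨆ m, ⨆ _ : m ≠ n, f m) = ⊥

/-- A commutative ring is arithmetical if its lattice of ideals is distributive. -/
def Arithmetical (A : Type) [CommRing A] : Prop :=
  ∀ I J K : Ideal A, I ⊓ (J ⊔ K) = I ⊓ J ⊔ I ⊓ K

namespace Stmt7Aux

variable {A : Type} [CommRing A]

/-- annihilator of an element -/
def ann (a : A) : Ideal A where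
  carrier := {x | x * a = 0}
  add_mem' := by
    intro x y hx hy
    simp only [Set.mem_setOf_eq] at *
    rw [add_mul, hx, hy, add_zero]
  zero_mem' := by simp
  smul_mem' := by
    intro c x hx
    simp only [smul_eq_mul, Set.mem_setOf_eq] at *
    rw [mul_assoc, hx, mul_zero]

lemma mem_ann {a x : A} : x ∈ ann a ↔ x * a = 0 := Iff.rfl

lemma sq_zero (hred : ∀ a : A, IsNilpotent a → a = 0) {a : A} (h : a * a = 0) : a = 0 :=
  hred a ⟨2, by rwa [pow_two]⟩

/-- key consequence of distributivity -/
lemma arith_colon (ha : Arithmetical A) (a b : A) :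
    ∃ d : A, d * b ∈ Ideal.span {a} ∧ (1 - d) * a ∈ Ideal.span {b} := by
  have hb : b ∈ (Ideal.span {b} ⊔ Ideal.span {a + b} : Ideal A) :=
    Ideal.mem_sup_left (Ideal.mem_span_singleton_self b)
  have hab : a + b ∈ (Ideal.span {b} ⊔ Ideal.span {a + b} : Ideal A) :=
    Ideal.mem_sup_right (Ideal.mem_span_singleton_self _)
  have hA : a ∈ (Ideal.span {b} ⊔ Ideal.span {a + b} : Ideal A) := by
    have := sub_mem hab hb; simpa using this
  have key : a ∈ (Ideal.span {a} ⊓ Ideal.span {b} ⊔ Ideal.span {a} ⊓ Ideal.span {a + b} : Ideal A) := by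
    rw [← ha]
    exact ⟨Ideal.mem_span_singleton_self a, hA⟩
  rcases Submodule.mem_sup.mp key with ⟨x, hx, y, hy, hxy⟩
  rcases Ideal.mem_span_singleton'.mp hy.2 with ⟨d, hd⟩
  refine ⟨d, ?_, ?_⟩
  · have h1 : d * b = y - d * a := by rw [← hd]; ring
    rw [h1]
    exact sub_mem hy.1 (Ideal.mul_mem_left _ d (Ideal.mem_span_singleton_self a))
  · have h2 : x = a - d * (a + b) := by rw [hd]; rw [← hxy]; ring
    have h3 : (1 - d) * a = x + d * b := by rw [h2]; ring
    rw [h3]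
    exact add_mem hx.2 (Ideal.mul_mem_left _ d (Ideal.mem_span_singleton_self b))

/-- no infinite pairwise-orthogonal family of nonzero elements -/
lemma no_orth (hred : ∀ a : A, IsNilpotent a → a = 0)
    (hfd : ¬ ∃ f : ℕ → Ideal A, (∀ n, f n ≠ ⊥) ∧ ∀ n, f n ⊓ (⨆ m, ⨆ _ : m ≠ n, f m) = ⊥) :
    ¬ ∃ y : ℕ → A, (∀ n, y n ≠ 0) ∧ ∀ m n, m ≠ n → y m * y n = 0 := by
  rintro ⟨y, hy0, hyo⟩
  apply hfd
  refine ⟨fun n => Ideal.span {y n}, fun n h => ?_, fun n => ?_⟩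
  · apply hy0 n
    have h' : Ideal.span {y n} = (⊥ : Ideal A) := h
    have := Ideal.mem_span_singleton_self (y n)
    rw [h'] at this
    simpa using this
  · rw [eq_bot_iff]
    intro t ht
    have hsup : (⨆ m, ⨆ _ : m ≠ n, Ideal.span {y m}) ≤ ann (y n) := by
      refine iSup_le fun m => iSup_le fun hm => ?_
      rw [Ideal.span_le, Set.singleton_subset_iff]
      exact hyo m n hm
    obtain ⟨r, hr⟩ := Ideal.mem_span_singleton'.mp ht.1
    have h2 : t * y n = 0 := hsup ht.2
    have h3 : t * t = 0 := by
      have h4 : t * t = r * (t * y n) := by rw [← hr]; ring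
      rw [h4, h2, mul_zero]
    rw [Submodule.mem_bot]
    exact sq_zero hred h3

/-- annihilators of nonzero elements -/
def AnnS (I : Ideal A) : Prop := ∃ a : A, a ≠ 0 ∧ I = ann a

/-- maximal annihilators -/
def Mx (P : Ideal A) : Prop := AnnS P ∧ ∀ J : Ideal A, AnnS J → P ≤ J → J = P

lemma exists_max (hred : ∀ a : A, IsNilpotent a → a = 0)
    (hfd : ¬ ∃ f : ℕ → Ideal A, (∀ n, f n ≠ ⊥) ∧ ∀ n, f n ⊓ (⨆ m, ⨆ _ : m ≠ n, f m) = ⊥)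
    {a : A} (h : a ≠ 0) : ∃ P : Ideal A, Mx P ∧ ann a ≤ P := by
  by_contra hc
  push_neg at hc
  have step : ∀ b : A, b ≠ 0 → ann a ≤ ann b →
      ∃ c : A, c ≠ 0 ∧ ann b < ann c ∧ ann a ≤ ann c := by
    intro b hb hab
    have hS : AnnS (ann b) := ⟨b, hb, rfl⟩
    have hnmx : ¬ Mx (ann b) := fun hm => hc _ hm hab
    have h2 : ¬ (∀ J : Ideal A, AnnS J → ann b ≤ J → J = ann b) := fun hmax => hnmx ⟨hS, hmax⟩
    push_neg at h2
    obtain ⟨J, hJS, hle, hne⟩ := h2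
    obtain ⟨c, hc0, rfl⟩ := hJS
    exact ⟨c, hc0, lt_of_le_of_ne hle (fun he => hne he.symm), le_trans hab hle⟩
  choose c hc0 hlt hle using step
  let g : {b : A // b ≠ 0 ∧ ann a ≤ ann b} → {b : A // b ≠ 0 ∧ ann a ≤ ann b} :=
    fun b => ⟨c b.1 b.2.1 b.2.2, hc0 b.1 b.2.1 b.2.2, hle b.1 b.2.1 b.2.2⟩
  let seq : ℕ → {b : A // b ≠ 0 ∧ ann a ≤ ann b} := fun n => g^[n] ⟨a, h, le_refl _⟩
  have hstep : ∀ n, ann (seq n).1 < ann (seq (n + 1)).1 := by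
    intro n
    have hs : seq (n + 1) = g (seq n) := Function.iterate_succ_apply' g n _
    rw [hs]
    exact hlt _ _ _
  have hmono : Monotone (fun n => ann (seq n).1) :=
    monotone_nat_of_le_succ fun n => (hstep n).le
  have hx : ∀ n, ∃ x, x ∈ ann (seq (n + 1)).1 ∧ x ∉ ann (seq n).1 := by
    intro n
    obtain ⟨x, hx1, hx2⟩ := SetLike.exists_of_lt (hstep n)
    exact ⟨x, hx1, hx2⟩
  choose x hx1 hx2 using hx
  have key : ∀ m n, m < n → (x m * (seq m).1) * (x n * (seq n).1) = 0 := by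
    intro m n hmn
    have h1 : x m * (seq m).1 ∈ ann (seq (m + 1)).1 := Ideal.mul_mem_right _ _ (hx1 m)
    have h2 : x m * (seq m).1 ∈ ann (seq n).1 := hmono hmn h1
    have h3 : (x m * (seq m).1) * (seq n).1 = 0 := mem_ann.mp h2
    calc (x m * (seq m).1) * (x n * (seq n).1)
        = x n * ((x m * (seq m).1) * (seq n).1) := by ring
      _ = 0 := by rw [h3, mul_zero]
  apply no_orth hred hfd
  refine ⟨fun n => x n * (seq n).1, fun n => ?_, fun m n hmn => ?_⟩
  · intro h0
    exact hx2 n (mem_ann.mpr h0)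
  · rcases lt_or_gt_of_ne hmn with hlt' | hlt'
    · exact key m n hlt'
    · rw [mul_comm]; exact key n m hlt'

lemma mx_prime (hred : ∀ a : A, IsNilpotent a → a = 0) {P : Ideal A} (hP : Mx P) :
    P.IsPrime := by
  obtain ⟨a, ha0, rfl⟩ := hP.1
  constructor
  · intro htop
    apply ha0
    have : (1 : A) ∈ ann a := htop ▸ Submodule.mem_top
    simpa using mem_ann.mp this
  · intro u v huv
    by_cases hu : u ∈ ann a
    · exact Or.inl hu
    · right
      have hua : u * a ≠ 0 := fun h0 => hu (mem_ann.mpr h0)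
      have hle : ann a ≤ ann (u * a) := by
        intro t ht
        rw [mem_ann] at ht ⊢
        calc t * (u * a) = u * (t * a) := by ring
          _ = 0 := by rw [ht, mul_zero]
      have heq : ann (u * a) = ann a := hP.2 _ ⟨u * a, hua, rfl⟩ hle
      rw [← heq, mem_ann]
      calc v * (u * a) = (u * v) * a := by ring
        _ = 0 := mem_ann.mp huv

lemma mx_orth (hred : ∀ a : A, IsNilpotent a → a = 0) {a b : A} (ha0 : a ≠ 0) (hb0 : b ≠ 0)
    (hPa : Mx (ann a)) (hPb : Mx (ann b)) (hne : ann a ≠ ann b) : a * b = 0 := by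
  by_contra hab
  have h1 : ann a ≤ ann (a * b) := by
    intro t ht
    rw [mem_ann] at ht ⊢
    calc t * (a * b) = (t * a) * b := by ring
      _ = 0 := by rw [ht, zero_mul]
  have h2 : ann b ≤ ann (a * b) := by
    intro t ht
    rw [mem_ann] at ht ⊢
    calc t * (a * b) = (t * b) * a := by ring
      _ = 0 := by rw [ht, zero_mul]
  have e1 : ann (a * b) = ann a := hPa.2 _ ⟨a * b, hab, rfl⟩ h1
  have e2 : ann (a * b) = ann b := hPb.2 _ ⟨a * b, hab, rfl⟩ h2
  exact hne (e1 ▸ e2)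

lemma mx_comax (ha : Arithmetical A) (hred : ∀ a : A, IsNilpotent a → a = 0)
    {P Q : Ideal A} (hP : Mx P) (hQ : Mx Q) (hne : P ≠ Q) : P ⊔ Q = ⊤ := by
  obtain ⟨a, ha0, rfl⟩ := hP.1
  obtain ⟨b, hb0, rfl⟩ := hQ.1
  have hab : a * b = 0 := mx_orth hred ha0 hb0 hP hQ hne
  obtain ⟨d, hd1, hd2⟩ := arith_colon ha a b
  have hsa : Ideal.span {a} ≤ ann b := by
    rw [Ideal.span_le, Set.singleton_subset_iff]; exact mem_ann.mpr hab
  have hsb : Ideal.span {b} ≤ ann a := by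
    rw [Ideal.span_le, Set.singleton_subset_iff]
    show b ∈ ann a
    rw [mem_ann, mul_comm]; exact hab
  have hbQ : b ∉ ann b := fun h => hb0 (sq_zero hred (mem_ann.mp h))
  have haP : a ∉ ann a := fun h => ha0 (sq_zero hred (mem_ann.mp h))
  haveI hQp : (ann b).IsPrime := mx_prime hred hQ
  haveI hPp : (ann a).IsPrime := mx_prime hred hP
  have hdQ : d ∈ ann b := by
    rcases hQp.mem_or_mem (hsa hd1) with h | h
    · exact h
    · exact absurd h hbQ
  have hdP : (1 - d) ∈ ann a := by
    rcases hPp.mem_or_mem (hsb hd2) with h | h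
    · exact h
    · exact absurd h haP
  rw [Ideal.eq_top_iff_one]
  have : (1 : A) = (1 - d) + d := by ring
  rw [this]
  exact Submodule.add_mem_sup hdP hdQ

lemma mx_finite (hred : ∀ a : A, IsNilpotent a → a = 0)
    (hfd : ¬ ∃ f : ℕ → Ideal A, (∀ n, f n ≠ ⊥) ∧ ∀ n, f n ⊓ (⨆ m, ⨆ _ : m ≠ n, f m) = ⊥) :
    (setOf (Mx (A := A))).Finite := by
  by_contra hinf
  have hinf2 : (setOf (Mx (A := A))).Infinite := hinf
  let e := hinf2.natEmbedding
  have hS : ∀ n : ℕ, AnnS ((e n).1 : Ideal A) := fun n => (e n).2.1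
  choose a ha0 haeq using hS
  apply no_orth hred hfd
  refine ⟨a, ha0, fun m n hmn => ?_⟩
  have hMm : Mx (ann (a m)) := (haeq m) ▸ (e m).2
  have hMn : Mx (ann (a n)) := (haeq n) ▸ (e n).2
  apply mx_orth hred (ha0 m) (ha0 n) hMm hMn
  intro he
  apply hmn
  apply e.injective
  apply Subtype.ext
  rw [haeq m, haeq n, he]

end Stmt7Aux

open Stmt7Aux in
theorem stmt7 (A : Type) [CommRing A] (ha : Arithmetical A)
    (hred : ∀ a : A, IsNilpotent a → a = 0) (hfd : FinDimL (Ideal A)) :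
    ∃ (n : ℕ) (D : Fin n → Type) (hD : ∀ i, CommRing (D i)),
      (∀ i, letI := hD i; IsDomain (D i)) ∧
      Nonempty (A ≃+* ((i : Fin n) → D i)) := by

  have hfd' : ¬ ∃ f : ℕ → Ideal A, (∀ n, f n ≠ ⊥) ∧ ∀ n, f n ⊓ (⨆ m, ⨆ _ : m ≠ n, f m) = ⊥ := hfd
  have hfin : (setOf (Mx (A := A))).Finite := mx_finite hred hfd
  set F := hfin.toFinset with hF
  set n := F.card with hn
  let e : Fin n ≃ {x // x ∈ F} := F.equivFin.symm
  let P : Fin n → Ideal A := fun i => ((e i) : Ideal A)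
  have hPMx : ∀ i, Mx (P i) := by
    intro i
    exact (Set.Finite.mem_toFinset hfin).mp (e i).2
  have hPinj : Function.Injective P := fun i j hij => e.injective (Subtype.ext hij)
  have hPsurj : ∀ Q : Ideal A, Mx Q → ∃ i, P i = Q := by
    intro Q hQ
    refine ⟨e.symm ⟨Q, ?_⟩, ?_⟩
    · exact (Set.Finite.mem_toFinset hfin).mpr hQ
    · show ((e (e.symm _)) : Ideal A) = Q
      rw [e.apply_symm_apply]
  have hinf : (⨅ i, P i) = ⊥ := by
    rw [eq_bot_iff]
    intro x hx
    rw [Submodule.mem_bot]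
    by_contra hx0
    obtain ⟨Q, hQ, hle⟩ := exists_max hred hfd hx0
    obtain ⟨b, hb, rfl⟩ := hQ.1
    obtain ⟨i, hi⟩ := hPsurj _ hQ
    have hxQ : x ∈ ann b := by
      have h2 := Ideal.mem_iInf.mp hx i
      rwa [hi] at h2
    have hbx : b ∈ ann x := by
      rw [mem_ann, mul_comm]
      exact mem_ann.mp hxQ
    exact hb (sq_zero hred (mem_ann.mp (hle hbx)))
  have hcop : Pairwise (Function.onFun IsCoprime P) := by
    intro i j hij
    rw [Function.onFun, Ideal.isCoprime_iff_sup_eq]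
    exact mx_comax ha hred (hPMx i) (hPMx j) (fun h => hij (hPinj h))
  refine ⟨n, fun i => A ⧸ P i, fun i => inferInstance, fun i => ?_, ?_⟩
  · haveI := mx_prime hred (hPMx i)
    exact Ideal.Quotient.isDomain (P i)
  · exact ⟨(RingEquiv.quotientBot A).symm.trans ((Ideal.quotEquivOfEq hinf.symm).trans
      (Ideal.quotientInfRingEquivPiQuotient P hcop))⟩
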